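/- arXiv:2504.02319 — 4 statements merged into one kernel-verified Lean document; each statement's English description precedes it below -/
import Mathlib

section
/- Let m ≡ 2 (mod 3) be an odd positive integer such that d = 9m^2 + 2m is square-free. Then d is congruent to 2 or 3 mod 4 and d is not of the form p, 2p₁, or p₁p₂ with p prime and p₁ ≡ p₂ ≡ 3 (mod 4) primes; consequently the class number of Q(√(9m²+2m)) is even. -/
open NumberField
open scoped nonZeroDivisors

/-- Key descent: no integer solutions to m s² + 6 m y s = 2 y² + e  with e = ±1, m ≥ 2. -/
lemma descent_aux (m e : ℤ) (hm : 2 ≤ m) (he : e = 1 ∨ e = -1) :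
    ∀ n : ℕ, ∀ y s : ℤ, y.natAbs = n → m * s ^ 2 + 6 * m * y * s ≠ 2 * y ^ 2 + e := by
  intro n
  induction n using Nat.strong_induction_on with
  | _ n ih =>
    intro y s hn hE
    rcases eq_or_ne y 0 with hy | hy
    · subst hy
      simp only [mul_zero, zero_mul, add_zero, pow_two] at hE
      -- hE : m * (s * s) = 0 + e
      rcases he with rfl | rfl
      · have hdvd : m ∣ 1 := ⟨s * s, by linarith [hE]⟩
        have := Int.le_of_dvd one_pos hdvd
        omega
      · nlinarith [mul_self_nonneg s, hE]
    · have hy2 : 1 ≤ y ^ 2 := by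
        have : 0 < y ^ 2 := by positivity
        omega
      have hpos : 0 < 2 * y ^ 2 + e := by rcases he with rfl | rfl <;> linarith
      have hs : s ≠ 0 := by
        rintro rfl
        simp at hE
        omega
      set s' : ℤ := -6 * y - s with hs'def
      have hE' : m * s' ^ 2 + 6 * m * y * s' = 2 * y ^ 2 + e := by
        simp only [hs'def]; linear_combination hE
      have hprod : m * (s * s') = -(2 * y ^ 2 + e) := by
        simp only [hs'def]; linear_combination -hE
      -- pick the root with smaller square
      obtain ⟨s₀, hE₀, hb₀⟩ :
          ∃ s₀ : ℤ, (m * s₀ ^ 2 + 6 * m * y * s₀ = 2 * y ^ 2 + e) ∧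
            m * s₀ ^ 2 ≤ 2 * y ^ 2 + e := by
        have hkey : (m * s ^ 2) * (m * s' ^ 2) = (2 * y ^ 2 + e) ^ 2 := by
          have : (m * (s * s')) ^ 2 = (2 * y ^ 2 + e) ^ 2 := by rw [hprod]; ring
          linear_combination this
        have hmnn : (0:ℤ) ≤ m := by omega
        rcases le_total (s ^ 2) (s' ^ 2) with h | h
        · refine ⟨s, hE, ?_⟩
          have hAB : m * s ^ 2 ≤ m * s' ^ 2 := mul_le_mul_of_nonneg_left h hmnn
          by_contra hc
          push_neg at hc
          have hB : 2 * y ^ 2 + e < m * s' ^ 2 := lt_of_lt_of_le hc hAB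
          nlinarith [mul_lt_mul'' hc hB hpos.le hpos.le, hkey]
        · refine ⟨s', hE', ?_⟩
          have hAB : m * s' ^ 2 ≤ m * s ^ 2 := mul_le_mul_of_nonneg_left h hmnn
          by_contra hc
          push_neg at hc
          have hB : 2 * y ^ 2 + e < m * s ^ 2 := lt_of_lt_of_le hc hAB
          nlinarith [mul_lt_mul'' hc hB hpos.le hpos.le, hkey]
      have hs₀ : s₀ ≠ 0 := by
        rintro rfl
        simp at hE₀
        omega
      have hs₀2 : 1 ≤ s₀ ^ 2 := by
        have : 0 < s₀ ^ 2 := by positivity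
        omega
      set y' : ℤ := 3 * m * s₀ - y with hy'def
      have hEy' : m * s₀ ^ 2 + 6 * m * y' * s₀ = 2 * y' ^ 2 + e := by
        simp only [hy'def]; linear_combination hE₀
      have h2yy' : 2 * (y * y') = e - m * s₀ ^ 2 := by
        simp only [hy'def]; linear_combination hE₀
      -- strict decrease
      have hms₀ : 2 ≤ m * s₀ ^ 2 := by nlinarith
      have hP1 : 1 ≤ m * s₀ ^ 2 - e := by rcases he with rfl | rfl <;> linarith
      have hP2 : m * s₀ ^ 2 - e ≤ 2 * y ^ 2 := by rcases he with rfl | rfl <;> linarith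
      have hstrict : y' ^ 2 < y ^ 2 := by
        by_contra hcon
        push_neg at hcon
        have hsq : 4 * (y ^ 2 * y' ^ 2) = (m * s₀ ^ 2 - e) ^ 2 := by
          linear_combination (2 * (y * y') + (e - m * s₀ ^ 2)) * h2yy'
        have heq : y' ^ 2 = y ^ 2 := by nlinarith
        have heq2 : m * s₀ ^ 2 - e = 2 * y ^ 2 := by nlinarith
        -- then 6 m y s₀ = 0, impossible
        have : 6 * m * y * s₀ = 0 := by linarith [hE₀]
        have hm0 : m ≠ 0 := by omega
        rcases mul_eq_zero.mp this with h' | h'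
        · rcases mul_eq_zero.mp h' with h'' | h''
          · omega
          · exact hy h''
        · exact hs₀ h'
      have hlt : y'.natAbs < n := by
        rw [← hn]
        exact Int.natAbs_lt_iff_sq_lt.mpr hstrict
      exact ih y'.natAbs hlt y' s₀ rfl hEy'

/-- No integer solutions to x² - (9m²+2m) y² = ± m for m ≥ 2 squarefree. -/
lemma no_norm_sol (m : ℤ) (hm : 2 ≤ m) (hsf : Squarefree m) (e : ℤ)
    (he : e = 1 ∨ e = -1) (x y : ℤ) : x ^ 2 - (9 * m ^ 2 + 2 * m) * y ^ 2 ≠ e * m := by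
  intro h
  set t : ℤ := x - 3 * m * y with htdef
  have hdvd : m ∣ t ^ 2 := ⟨2 * y ^ 2 + e - 6 * y * t, by simp only [htdef]; linear_combination h⟩
  have hmt : m ∣ t := (hsf.dvd_pow_iff_dvd two_ne_zero).mp hdvd
  obtain ⟨s, hs⟩ := hmt
  have hm0 : m ≠ 0 := by omega
  have hE : m * s ^ 2 + 6 * m * y * s = 2 * y ^ 2 + e := by
    apply mul_left_cancel₀ hm0
    have hx : x = m * s + 3 * m * y := by omega
    subst hx
    linear_combination h
  exact descent_aux m e hm he y.natAbs y s rfl hE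

/-- A rational whose square times a squarefree natural is an integer is itself an integer. -/
lemma rat_int_of_squarefree (d : ℕ) (hd : Squarefree d) (q : ℚ) (n : ℤ)
    (h : (d : ℚ) * q ^ 2 = (n : ℚ)) : ∃ z : ℤ, (z : ℚ) = q := by
  have hb0 : (q.den : ℚ) ≠ 0 := by exact_mod_cast q.den_ne_zero
  have hq : (q.num : ℚ) / (q.den : ℚ) = q := Rat.num_div_den q
  have hZQ : (d : ℚ) * (q.num : ℚ) ^ 2 = (n : ℚ) * (q.den : ℚ) ^ 2 := by
    rw [← hq] at h
    field_simp at h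
    linear_combination h
  have hZ : (d : ℤ) * q.num ^ 2 = n * (q.den : ℤ) ^ 2 := by exact_mod_cast hZQ
  have hdvd : (q.den : ℤ) ^ 2 ∣ (d : ℤ) * q.num ^ 2 := ⟨n, by linarith [hZ]⟩
  have hdvdN : q.den ^ 2 ∣ d * q.num.natAbs ^ 2 := by
    have := Int.natAbs_dvd_natAbs.mpr hdvd
    simpa [Int.natAbs_mul, Int.natAbs_pow] using this
  have hcop : (q.den ^ 2).Coprime (q.num.natAbs ^ 2) := Nat.Coprime.pow 2 2 q.reduced.symm
  have hdd : q.den ^ 2 ∣ d := hcop.dvd_of_dvd_mul_right hdvdN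
  have hden : q.den = 1 := by
    have := hd q.den (by rwa [← pow_two])
    exact Nat.isUnit_iff.mp this
  exact ⟨q.num, by rw [← hq, hden]; simp⟩

lemma quad_helper {K : Type} [Field K] [NumberField K] (d : ℕ) (hd : 2 ≤ d)
    (hsf : Squarefree d) (hdeg : Module.finrank ℚ K = 2) (α : K) (hα : α ^ 2 = (d : K)) :
    (∀ γ : K, ∃ x y : ℚ, γ = algebraMap ℚ K x + algebraMap ℚ K y * α) ∧
    (∀ x y : ℚ, Algebra.norm ℚ (algebraMap ℚ K x + algebraMap ℚ K y * α) = x ^ 2 - d * y ^ 2 ∧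
      Algebra.trace ℚ K (algebraMap ℚ K x + algebraMap ℚ K y * α) = 2 * x) := by
  have hirr : ∀ a : ℚ, a • (1 : K) ≠ α := by
    intro a ha
    have ha' : algebraMap ℚ K a = α := by rwa [Algebra.smul_def, mul_one] at ha
    have ha2 : algebraMap ℚ K (a ^ 2) = algebraMap ℚ K ((d : ℚ)) := by
      rw [map_pow, ha', hα]; simp
    have ha2' : a ^ 2 = (d : ℚ) := (algebraMap ℚ K).injective ha2
    have h : (d : ℚ) * a ^ 2 = (((d ^ 2 : ℕ) : ℤ) : ℚ) := by rw [ha2']; push_cast; ring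
    obtain ⟨z, hz⟩ := rat_int_of_squarefree d hsf a _ h
    have hz2 : (z : ℚ) ^ 2 = (d : ℚ) := by rw [hz, ha2']
    have hz2' : z ^ 2 = (d : ℤ) := by exact_mod_cast hz2
    have h2 : z.natAbs * z.natAbs = d := by
      have := congrArg Int.natAbs hz2'
      simpa [pow_two, Int.natAbs_mul] using this
    have hu := Nat.isUnit_iff.mp (hsf z.natAbs (h2 ▸ dvd_refl d))
    rw [hu] at h2
    omega
  have li : LinearIndependent ℚ ![(1 : K), α] :=
    (LinearIndependent.pair_iff' one_ne_zero).mpr hirr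
  have hcard : Fintype.card (Fin 2) = Module.finrank ℚ K := by simp [hdeg]
  set b : Module.Basis (Fin 2) ℚ K := basisOfLinearIndependentOfCardEqFinrank li hcard with hbdef
  have hb : ⇑b = ![(1 : K), α] := coe_basisOfLinearIndependentOfCardEqFinrank li hcard
  have hb0 : b 0 = 1 := by rw [hb]; rfl
  have hb1 : b 1 = α := by rw [hb]; rfl
  have hrepr : ∀ (u v : ℚ) (i : Fin 2),
      b.repr (algebraMap ℚ K u + algebraMap ℚ K v * α) i = ![u, v] i := by
    intro u v i
    have h1 : algebraMap ℚ K u + algebraMap ℚ K v * α = u • b 0 + v • b 1 := by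
      rw [hb0, hb1, Algebra.smul_def, Algebra.smul_def, mul_one]
    rw [h1, map_add, map_smul, map_smul, b.repr_self, b.repr_self]
    fin_cases i <;> simp [Finsupp.single_apply]
  constructor
  · intro γ
    refine ⟨b.repr γ 0, b.repr γ 1, ?_⟩
    have := b.sum_repr γ
    rw [Fin.sum_univ_two, hb0, hb1, Algebra.smul_def, Algebra.smul_def, mul_one] at this
    exact this.symm
  · intro x y
    set β : K := algebraMap ℚ K x + algebraMap ℚ K y * α with hβ
    have hmul : β * α = algebraMap ℚ K ((d : ℚ) * y) + algebraMap ℚ K x * α := by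
      have h2 : algebraMap ℚ K ((d : ℚ) * y) = (d : K) * algebraMap ℚ K y := by
        rw [map_mul]; congr 1; simp
      rw [h2, ← hα, hβ]; ring
    have A00 : Algebra.leftMulMatrix b β 0 0 = x := by
      rw [Algebra.leftMulMatrix_eq_repr_mul, hb0, mul_one, hβ, hrepr x y 0]; rfl
    have A10 : Algebra.leftMulMatrix b β 1 0 = y := by
      rw [Algebra.leftMulMatrix_eq_repr_mul, hb0, mul_one, hβ, hrepr x y 1]; rfl
    have A01 : Algebra.leftMulMatrix b β 0 1 = (d : ℚ) * y := by
      rw [Algebra.leftMulMatrix_eq_repr_mul, hb1, hmul, hrepr ((d : ℚ) * y) x 0]; rfl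
    have A11 : Algebra.leftMulMatrix b β 1 1 = x := by
      rw [Algebra.leftMulMatrix_eq_repr_mul, hb1, hmul, hrepr ((d : ℚ) * y) x 1]; rfl
    constructor
    · rw [Algebra.norm_eq_matrix_det b β, Matrix.det_fin_two, A00, A11, A01, A10]
      ring
    · rw [Algebra.trace_eq_matrix_trace b β, Matrix.trace_fin_two, A00, A11]
      ring

set_option maxHeartbeats 1000000 in
theorem class_number_even (m : ℕ) (hm : 0 < m) (hm2 : Odd m) (hm3 : m % 3 = 2)
    (hsf : Squarefree (9 * m ^ 2 + 2 * m))
    (K : Type) [Field K] [NumberField K]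
    (hdeg : Module.finrank ℚ K = 2)
    (α : K) (hα : α ^ 2 = (9 * m ^ 2 + 2 * m : ℕ)) :
    ((9 * m ^ 2 + 2 * m) % 4 = 2 ∨ (9 * m ^ 2 + 2 * m) % 4 = 3) ∧
    (¬ ∃ p : ℕ, p.Prime ∧ 9 * m ^ 2 + 2 * m = p) ∧
    (¬ ∃ p₁ : ℕ, p₁.Prime ∧ p₁ % 4 = 3 ∧ 9 * m ^ 2 + 2 * m = 2 * p₁) ∧
    (¬ ∃ p₁ p₂ : ℕ, p₁.Prime ∧ p₂.Prime ∧ p₁ % 4 = 3 ∧ p₂ % 4 = 3 ∧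
      9 * m ^ 2 + 2 * m = p₁ * p₂) ∧
    Even (classNumber K) := by
  obtain ⟨k, hk⟩ := hm2
  have hm5 : 5 ≤ m := by omega
  have hd4 : (9 * m ^ 2 + 2 * m) % 4 = 3 := by
    have h : 9 * m ^ 2 + 2 * m = 3 + 4 * (9 * (k * k) + 10 * k + 2) := by subst hk; ring
    rw [h, Nat.add_mul_mod_self_left]
  have hdodd : (9 * m ^ 2 + 2 * m) % 2 = 1 := by
    have h : 9 * m ^ 2 + 2 * m = 1 + 2 * (18 * (k * k) + 20 * k + 5) := by subst hk; ring
    rw [h, Nat.add_mul_mod_self_left]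
  refine ⟨Or.inr hd4, ?_, ?_, ?_, ?_⟩
  · rintro ⟨p, hp, hpd⟩
    have hfac : 9 * m ^ 2 + 2 * m = m * (9 * m + 2) := by ring
    rw [hfac] at hpd
    rw [← hpd] at hp
    rcases Nat.prime_mul_iff.mp hp with ⟨-, h⟩ | ⟨-, h⟩ <;> omega
  · rintro ⟨p, hp, hp4, hpd⟩
    omega
  · rintro ⟨p₁, p₂, hp₁, hp₂, h14, h24, hpd⟩
    rw [hpd, Nat.mul_mod, h14, h24] at hd4
    omega
  · -- the class number is even
    set dn : ℕ := 9 * m ^ 2 + 2 * m with hdn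
    have hd2 : 2 ≤ dn := by
      have : 1 ≤ m ^ 2 := Nat.one_le_pow _ _ (by omega)
      omega
    obtain ⟨hsurj, hform⟩ := quad_helper dn hd2 hsf hdeg α hα
    have hαint : IsIntegral ℤ α := by
      refine ⟨Polynomial.X ^ 2 - Polynomial.C ((dn : ℤ)), Polynomial.monic_X_pow_sub_C _ two_ne_zero, ?_⟩
      simp only [Polynomial.eval₂_sub, Polynomial.eval₂_pow, Polynomial.eval₂_X,
        Polynomial.eval₂_C, hα]
      rw [show (algebraMap ℤ K) ((dn : ℤ)) = ((dn : ℕ) : K) by push_cast; rfl]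
      ring
    set a : 𝓞 K := ⟨α, hαint⟩ with hadef
    have haK : (algebraMap (𝓞 K) K) a = α := rfl
    set mO : 𝓞 K := (m : 𝓞 K) with hmO
    have hmOK : (algebraMap (𝓞 K) K) mO = (m : K) := by rw [hmO, map_natCast]
    set I : Ideal (𝓞 K) := Ideal.span {mO, a} with hI
    have haa : a * a = mO * ((9 * m + 2 : ℕ) : 𝓞 K) := by
      apply RingOfIntegers.coe_injective
      rw [map_mul, map_mul, haK, hmOK, map_natCast]
      rw [← pow_two, hα, hdn]
      push_cast
      ring
    have hIle : I * I ≤ Ideal.span {mO} := by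
      apply Ideal.mul_le.mpr
      intro r hr s hs
      rw [hI, Ideal.mem_span_pair] at hr hs
      obtain ⟨c1, c2, hc⟩ := hr
      obtain ⟨e1, e2, he⟩ := hs
      rw [Ideal.mem_span_singleton]
      refine ⟨c1 * e1 * mO + (c1 * e2 + c2 * e1) * a + c2 * e2 * ((9 * m + 2 : ℕ) : 𝓞 K), ?_⟩
      rw [← hc, ← he]
      linear_combination (c2 * e2) * haa
    have hmateq : mO + (k : 𝓞 K) * (a * a) = ((1 + 9 * k : ℕ) : 𝓞 K) * (mO * mO) := by
      rw [haa]
      have hnat : m + k * (m * (9 * m + 2)) = (1 + 9 * k) * (m * m) := by subst hk; ring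
      have hcast := congrArg (fun n : ℕ => (n : 𝓞 K)) hnat
      push_cast at hcast ⊢
      linear_combination hcast
    have hmemI : mO ∈ I := Ideal.subset_span (by simp)
    have hamemI : a ∈ I := Ideal.subset_span (by simp)
    have hmemII : mO ∈ I * I := by
      have h1 : mO * mO ∈ I * I := Ideal.mul_mem_mul hmemI hmemI
      have h2 : a * a ∈ I * I := Ideal.mul_mem_mul hamemI hamemI
      have heq : mO = ((1 + 9 * k : ℕ) : 𝓞 K) * (mO * mO) - (k : 𝓞 K) * (a * a) := by
        rw [← hmateq]; ring
      rw [heq]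
      exact Ideal.sub_mem _ (Ideal.mul_mem_left _ _ h1) (Ideal.mul_mem_left _ _ h2)
    have hI2 : I * I = Ideal.span {mO} :=
      le_antisymm hIle (by rwa [Ideal.span_le, Set.singleton_subset_iff])
    have hmO0 : mO ≠ 0 := by
      rw [hmO, Ne, Nat.cast_eq_zero]
      omega
    have hI0 : I ≠ 0 := by
      intro h0
      rw [h0, Ideal.zero_eq_bot] at hmemI
      exact hmO0 (Ideal.mem_bot.mp hmemI)
    have hInzd : I ∈ (Ideal (𝓞 K))⁰ := mem_nonZeroDivisors_iff_ne_zero.mpr hI0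
    have hspan0 : Ideal.span {mO} ∈ (Ideal (𝓞 K))⁰ := by
      apply mem_nonZeroDivisors_iff_ne_zero.mpr
      rw [Ne, Ideal.zero_eq_bot, Ideal.span_singleton_eq_bot]
      exact hmO0
    -- absNorm of span {mO}
    have hnormmO : Algebra.norm ℤ mO = (m : ℤ) ^ 2 := by
      have h1 : ((Algebra.norm ℤ mO : ℤ) : ℚ) = Algebra.norm ℚ ((mO : K)) :=
        Algebra.coe_norm_int mO
      have h2 : ((mO : K)) = algebraMap ℚ K ((m : ℚ)) := by
        rw [RingOfIntegers.coe_eq_algebraMap, hmOK]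
        push_cast
        rfl
      rw [h2, Algebra.norm_algebraMap, hdeg] at h1
      exact_mod_cast h1
    have hnormspan : Ideal.absNorm (Ideal.span {mO}) = m ^ 2 := by
      rw [Ideal.absNorm_span_singleton, hnormmO]
      rw [show ((m : ℤ) ^ 2) = ((m ^ 2 : ℕ) : ℤ) by push_cast; ring]
      exact Int.natAbs_natCast _
    have habs : Ideal.absNorm I = m := by
      have h1 := congrArg Ideal.absNorm hI2
      rw [map_mul, hnormspan] at h1
      have := Nat.mul_self_inj (m := Ideal.absNorm I) (n := m)
      rw [← pow_two] at *
      nlinarith [h1]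
    -- I is not principal
    have hIprin : ¬ I.IsPrincipal := by
      rintro ⟨β, hβ⟩
      have hβnorm : (Algebra.norm ℤ β).natAbs = m := by
        rw [← habs, hβ]
        exact (Ideal.absNorm_span_singleton β).symm
      obtain ⟨x, y, hxy⟩ := hsurj ((β : K))
      obtain ⟨hN, hT⟩ := hform x y
      rw [← hxy] at hN hT
      obtain ⟨X, hX⟩ : ∃ X : ℤ, (X : ℚ) = 2 * x :=
        ⟨Algebra.trace ℤ (𝓞 K) β, by rw [Algebra.coe_trace_int]; exact hT⟩
      set N : ℤ := Algebra.norm ℤ β with hNdef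
      have hNQ : (N : ℚ) = x ^ 2 - dn * y ^ 2 := by
        rw [hNdef, Algebra.coe_norm_int]; exact hN
      have hdq : (dn : ℚ) * (2 * y) ^ 2 = ((X ^ 2 - 4 * N : ℤ) : ℚ) := by
        push_cast
        linear_combination 4 * hNQ - ((X : ℚ) + 2 * x) * hX
      obtain ⟨Y, hY⟩ := rat_int_of_squarefree dn hsf (2 * y) (X ^ 2 - 4 * N) hdq
      have hZeq : X ^ 2 - (dn : ℤ) * Y ^ 2 = 4 * N := by
        have hq : (X : ℚ) ^ 2 - (dn : ℚ) * (Y : ℚ) ^ 2 = 4 * (N : ℚ) := by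
          rw [hY]
          push_cast at hdq
          linear_combination -hdq
        exact_mod_cast hq
      -- parity argument mod 4
      obtain ⟨t4, ht4⟩ : ∃ t : ℕ, dn = 4 * t + 3 := ⟨dn / 4, by omega⟩
      have h40 : (4 : ZMod 4) = 0 := by decide
      have hdn3 : ((dn : ℕ) : ZMod 4) = 3 := by rw [ht4]; push_cast; rw [h40]; ring
      have hZmod : ((X : ZMod 4)) ^ 2 - 3 * ((Y : ZMod 4)) ^ 2 = 0 := by
        have hc := congrArg (fun z : ℤ => (z : ZMod 4)) hZeq
        push_cast at hc
        rw [hdn3, h40, zero_mul] at hc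
        exact hc
      have hkey4 : ∀ A B : ZMod 4, A ^ 2 - 3 * B ^ 2 = 0 → (A = 0 ∨ A = 2) ∧ (B = 0 ∨ B = 2) := by
        decide
      obtain ⟨hA, hB⟩ := hkey4 _ _ hZmod
      have hXeven : (2 : ℤ) ∣ X := by
        rcases hA with h | h
        · have := (ZMod.intCast_zmod_eq_zero_iff_dvd X 4).mp h
          omega
        · have h2 : ((X - 2 : ℤ) : ZMod 4) = 0 := by push_cast; rw [h]; ring
          have := (ZMod.intCast_zmod_eq_zero_iff_dvd (X - 2) 4).mp h2
          omega
      have hYeven : (2 : ℤ) ∣ Y := by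
        rcases hB with h | h
        · have := (ZMod.intCast_zmod_eq_zero_iff_dvd Y 4).mp h
          omega
        · have h2 : ((Y - 2 : ℤ) : ZMod 4) = 0 := by push_cast; rw [h]; ring
          have := (ZMod.intCast_zmod_eq_zero_iff_dvd (Y - 2) 4).mp h2
          omega
      obtain ⟨x', hx'⟩ := hXeven
      obtain ⟨y', hy'⟩ := hYeven
      have hfinal : x' ^ 2 - (dn : ℤ) * y' ^ 2 = N := by
        have h4 : (4 : ℤ) * (x' ^ 2 - (dn : ℤ) * y' ^ 2) = 4 * N := by
          rw [hx', hy'] at hZeq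
          linear_combination hZeq
        linarith
      have hNpm : N = (m : ℤ) ∨ N = -(m : ℤ) := by
        rcases Int.natAbs_eq N with h | h
        · left; rw [h, hβnorm]
        · right; rw [h, hβnorm]
      have hmZ : (2 : ℤ) ≤ (m : ℤ) := by exact_mod_cast (by omega : 2 ≤ m)
      have hmsq : Squarefree ((m : ℕ) : ℤ) := by
        rw [Int.squarefree_natCast]
        exact hsf.squarefree_of_dvd ⟨9 * m + 2, by ring⟩
      have hdn' : (dn : ℤ) = 9 * (m : ℤ) ^ 2 + 2 * (m : ℤ) := by rw [hdn]; push_cast; ring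
      rcases hNpm with h | h
      · exact no_norm_sol (m : ℤ) hmZ hmsq 1 (Or.inl rfl) x' y'
          (by rw [← hdn', hfinal, h]; ring)
      · exact no_norm_sol (m : ℤ) hmZ hmsq (-1) (Or.inr rfl) x' y'
          (by rw [← hdn', hfinal, h]; ring)
    -- conclude
    set g : ClassGroup (𝓞 K) := ClassGroup.mk0 ⟨I, hInzd⟩ with hg
    have hmulsub : (⟨I, hInzd⟩ : (Ideal (𝓞 K))⁰) * ⟨I, hInzd⟩ = ⟨Ideal.span {mO}, hspan0⟩ :=
      Subtype.ext hI2
    have hg2 : g ^ 2 = 1 := by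
      have e1 : g * g = ClassGroup.mk0 ⟨Ideal.span {mO}, hspan0⟩ := by
        rw [hg, ← MonoidHom.map_mul ClassGroup.mk0, hmulsub]
      rw [pow_two, e1, ClassGroup.mk0_eq_one_iff hspan0]
      exact ⟨⟨mO, rfl⟩⟩
    have hg1 : g ≠ 1 := by
      intro h1
      rw [hg] at h1
      exact hIprin ((ClassGroup.mk0_eq_one_iff hInzd).mp h1)
    haveI : Fact (Nat.Prime 2) := ⟨Nat.prime_two⟩
    have horder : orderOf g = 2 := orderOf_eq_prime hg2 hg1
    have hdvd : 2 ∣ Fintype.card (ClassGroup (𝓞 K)) := horder ▸ orderOf_dvd_card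
    rw [even_iff_two_dvd]
    exact hdvd
end

section
/- Let m be a positive integer and p ≥ 5 a prime dividing m. Then (12m³ + 4m² + 113m + 1)·p² ≠ 108m³ + 36m² + 27p⁴m + 30p²m + 9p⁴; i.e., the ideal classes B and C in k_m have distinct partial zeta values at −1. -/
/-- Auxiliary: the reduced equation with `m = p * k`, `k ≥ 2`, is impossible. -/
lemma B_ne_C_aux (p k : ℤ) (hp : 5 ≤ p) (hk : 2 ≤ k)
    (h : (12 * (p * k) ^ 3 + 4 * (p * k) ^ 2 + 113 * (p * k) + 1) * p ^ 2 =
      108 * (p * k) ^ 3 + 36 * (p * k) ^ 2 + 27 * p ^ 4 * (p * k) + 30 * p ^ 2 * (p * k) +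
        9 * p ^ 4) : False := by
  have hp0 : (0:ℤ) < p := by linarith
  have hk0 : (0:ℤ) < k := by linarith
  have hp2 : (25:ℤ) ≤ p^2 := by nlinarith
  have hk2 : (4:ℤ) ≤ k^2 := by nlinarith
  have hpk : (10:ℤ) ≤ p*k := by nlinarith
  have h1 : 25 * (p^3*k^3) ≤ p^2 * (p^3*k^3) := mul_le_mul_of_nonneg_right hp2 (by positivity)
  have h2 : 4 * (p^5*k) ≤ k^2 * (p^5*k) := mul_le_mul_of_nonneg_right hk2 (by positivity)
  have h3 : 4 * (p^3*k) ≤ k^2 * (p^3*k) := mul_le_mul_of_nonneg_right hk2 (by positivity)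
  have h4 : 10 * (p^2*k^2) ≤ (p*k) * (p^2*k^2) := mul_le_mul_of_nonneg_right hpk (by positivity)
  have h5 : 10 * p^4 ≤ (p*k) * p^4 := mul_le_mul_of_nonneg_right hpk (by positivity)
  have h6 : p^2 ≤ p^2 * p^2 := le_mul_of_one_le_left (by positivity) (by nlinarith)
  nlinarith [h, h1, h2, h3, h4, h5, h6]

theorem B_ne_C (m p : ℕ) (hm : 0 < m) (hp : p.Prime) (hp5 : 5 ≤ p) (hpm : p ∣ m) :
    (12 * m ^ 3 + 4 * m ^ 2 + 113 * m + 1) * p ^ 2 ≠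
      108 * m ^ 3 + 36 * m ^ 2 + 27 * p ^ 4 * m + 30 * p ^ 2 * m + 9 * p ^ 4 := by
  obtain ⟨k, rfl⟩ := hpm
  have hk : 1 ≤ k := by
    rcases Nat.eq_zero_or_pos k with h | h
    · simp [h] at hm
    · exact h
  intro h
  rcases eq_or_lt_of_le hk with h1 | h2
  · subst h1
    nlinarith [sq_nonneg p, hp5, sq_nonneg (p*p)]
  · have hk2 : 2 ≤ k := h2
    have hZ : ((12 * ((p:ℤ) * k) ^ 3 + 4 * ((p:ℤ) * k) ^ 2 + 113 * ((p:ℤ) * k) + 1) * (p:ℤ) ^ 2 =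
        108 * ((p:ℤ) * k) ^ 3 + 36 * ((p:ℤ) * k) ^ 2 + 27 * (p:ℤ) ^ 4 * ((p:ℤ) * k) +
          30 * (p:ℤ) ^ 2 * ((p:ℤ) * k) + 9 * (p:ℤ) ^ 4) := by exact_mod_cast h
    exact B_ne_C_aux p k (by exact_mod_cast hp5) (by exact_mod_cast hk2) hZ
end

section
/- Let m ≡ 2 (mod 3) be an odd positive integer with 9m² + 2m square-free. The ideal class A of (2, 1+√(9m²+2m)) in Q(√(9m²+2m)) is non-principal and has order exactly 2 in the class group. -/
open NumberField Polynomial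
open scoped nonZeroDivisors


lemma int_mul_pred_nonneg (t : ℤ) : 0 ≤ t * (t - 1) := by
  rcases le_or_gt t 0 with h | h
  · have h2 : t - 1 ≤ 0 := by omega
    nlinarith
  · nlinarith

/-- No solutions to `x² - (9m²+2m) y² = ±2` for `m ≥ 2`. -/
lemma core_dioph (m : ℤ) (hm : 2 ≤ m) :
    ∀ n : ℕ, ∀ x y e : ℤ, y.natAbs = n → (e = 2 ∨ e = -2) →
      x ^ 2 - (9 * m ^ 2 + 2 * m) * y ^ 2 ≠ e := by
  intro n
  induction n using Nat.strong_induction_on with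
  | _ n ih =>
    intro x y e hyn he heq
    obtain ⟨X, Y, hX0, hY0, heq', hYn⟩ :
        ∃ X Y : ℤ, 0 ≤ X ∧ 0 ≤ Y ∧ X ^ 2 - (9 * m ^ 2 + 2 * m) * Y ^ 2 = e ∧ Y.natAbs = n :=
      ⟨|x|, |y|, abs_nonneg x, abs_nonneg y, by rw [sq_abs, sq_abs]; exact heq,
        by rw [Int.natAbs_abs]; exact hyn⟩
    clear heq hyn
    rcases eq_or_lt_of_le hY0 with h0 | hYpos
    · have hx2 : X ^ 2 = e := by rw [← h0] at heq'; linarith [heq']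
      rcases he with rfl | rfl
      · nlinarith [int_mul_pred_nonneg (X - 1), sq_nonneg X]
      · nlinarith [sq_nonneg X]
    · -- Y ≥ 1
      have hXpos : 0 < X := by
        rcases he with rfl | rfl <;> nlinarith [sq_nonneg X]
      by_cases hsmall : e = 2 ∧ Y ≤ 4
      · obtain ⟨rfl, hY4⟩ := hsmall
        obtain ⟨t, ht⟩ : ∃ t : ℤ, t = X - 3 * m * Y := ⟨_, rfl⟩
        have hkey : t * (t + 6 * m * Y) = 2 * m * Y ^ 2 + 2 := by
          rw [ht]; linear_combination heq'
        have ht6 : 0 < t + 6 * m * Y := by nlinarith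
        have htpos : 0 < t := by
          by_contra hc
          push_neg at hc
          nlinarith [mul_nonneg (neg_nonneg.2 hc) ht6.le,
            mul_pos (show (0:ℤ) < m by omega) (pow_pos hYpos 2)]
        have hcases : t = 1 ∨ 2 ≤ t := by omega
        interval_cases Y
        · nlinarith [mul_nonneg (show (0:ℤ) ≤ t - 1 by omega) ht6.le]
        · nlinarith [mul_nonneg (show (0:ℤ) ≤ t - 1 by omega) ht6.le]
        · rcases hcases with h1 | h2
          · rw [h1] at hkey; linarith
          · nlinarith [mul_nonneg (show (0:ℤ) ≤ t - 2 by omega) ht6.le]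
        · rcases hcases with h1 | h2
          · rw [h1] at hkey; linarith
          · nlinarith [mul_nonneg (show (0:ℤ) ≤ t - 2 by omega) ht6.le]
      · -- descent
        have heb : -2 ≤ e ∧ e ≤ 2 := by rcases he with rfl | rfl <;> norm_num
        have hY2 : 1 ≤ Y ^ 2 := by nlinarith
        have hmY2 : 2 ≤ m * Y ^ 2 := by
          nlinarith [mul_nonneg (show (0:ℤ) ≤ m - 2 by omega)
            (show (0:ℤ) ≤ Y ^ 2 - 1 by linarith)]
        obtain ⟨x', hx'⟩ : ∃ x' : ℤ, x' = (9 * m + 1) * X - 3 * (9 * m ^ 2 + 2 * m) * Y := ⟨_, rfl⟩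
        obtain ⟨y', hy'⟩ : ∃ y' : ℤ, y' = (9 * m + 1) * Y - 3 * X := ⟨_, rfl⟩
        have hid : x' ^ 2 - (9 * m ^ 2 + 2 * m) * y' ^ 2 = e := by
          rw [hx', hy']; linear_combination heq'
        have h9e : 9 * e < Y ^ 2 := by
          rcases he with rfl | rfl
          · have h5 : 5 ≤ Y := by omega
            nlinarith
          · linarith
        have hA : 0 < (9 * m + 1) * Y := mul_pos (by omega) hYpos
        have hC : 0 < 9 * m * Y := mul_pos (by omega) hYpos
        have hy'pos : 0 < y' := by
          rw [hy']
          nlinarith [heq', h9e, hA, hXpos]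
        have hy'lt : y' < Y := by
          rw [hy']
          nlinarith [heq', hmY2, hC, hXpos, heb.1]
        exact ih y'.natAbs (by omega) x' y' e rfl he hid


lemma rat_int_of_sq (r : ℚ) (n : ℤ) (h : r ^ 2 = (n : ℚ)) : ∃ c : ℤ, (c : ℚ) = r := by
  have hint : IsIntegral ℤ r := by
    refine ⟨X ^ 2 - C n, monic_X_pow_sub_C n two_ne_zero, ?_⟩
    rw [eval₂_sub, eval₂_pow, eval₂_X, eval₂_C]
    simp [h]
  exact IsIntegrallyClosed.isIntegral_iff.mp hint

lemma parity_step (D t s w : ℤ) (hD : D % 4 = 3) (h : t ^ 2 - D * s ^ 2 = 4 * w)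
    (hw : w = 2 ∨ w = -2) : 2 ∣ t ∧ 2 ∣ s := by
  obtain ⟨u, hu⟩ : ∃ u, D = 4 * u + 3 := ⟨D / 4, by omega⟩
  subst hu
  rcases Int.even_or_odd t with ⟨a, rfl⟩ | ⟨a, rfl⟩ <;>
    rcases Int.even_or_odd s with ⟨b, rfl⟩ | ⟨b, rfl⟩
  · exact ⟨⟨a, by ring⟩, ⟨b, by ring⟩⟩
  · exfalso
    obtain ⟨Z, hZ⟩ : ∃ Z : ℤ, 4 * Z = 3 :=
      ⟨a ^ 2 - 4 * u * b ^ 2 - 4 * u * b - u - 3 * b ^ 2 - 3 * b - w, by linear_combination h⟩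
    omega
  · exfalso
    obtain ⟨Z, hZ⟩ : ∃ Z : ℤ, 4 * Z = 4 * w - 1 :=
      ⟨a ^ 2 + a - 4 * u * b ^ 2 - 3 * b ^ 2, by linear_combination h⟩
    omega
  · exfalso
    obtain ⟨Z, hZ⟩ : ∃ Z : ℤ, 4 * Z = 4 * w + 2 :=
      ⟨a ^ 2 + a - 4 * u * b ^ 2 - 4 * u * b - u - 3 * b ^ 2 - 3 * b, by linear_combination h⟩
    rcases hw with rfl | rfl <;> omega


theorem no_norm_pm_two (m : ℕ) (hm5 : 2 ≤ (m : ℤ)) (hmodd : Odd m)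
    (hsf : Squarefree (9 * m ^ 2 + 2 * m))
    (K : Type) [Field K] [NumberField K]
    (hdeg : Module.finrank ℚ K = 2)
    (α : 𝓞 K) (hα : α ^ 2 = (9 * m ^ 2 + 2 * m : ℕ))
    (β : 𝓞 K) (n : ℤ) (hn : Algebra.norm ℤ β = n) (hn2 : n = 2 ∨ n = -2)
    (hcore : ∀ x y e : ℤ, (e = 2 ∨ e = -2) →
      x ^ 2 - (9 * (m:ℤ) ^ 2 + 2 * m) * y ^ 2 ≠ e) : False := by
  set d : ℕ := 9 * m ^ 2 + 2 * m with hd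
  have hd1 : 1 < d := by
    have h2 : 2 ≤ m := by exact_mod_cast hm5
    rw [hd]; nlinarith [h2]
  -- θ and its square
  set θ : K := algebraMap (𝓞 K) K α with hθdef
  have hθ2 : θ ^ 2 = (d : K) := by
    rw [hθdef, ← map_pow, hα, map_natCast]
  have hdK : (d : K) ≠ 0 := by
    exact_mod_cast Nat.cast_ne_zero.mpr (Nat.zero_lt_of_lt hd1).ne'
  -- no rational square root of d
  have hnsq : ∀ r : ℚ, r ^ 2 ≠ (d : ℚ) := by
    intro r hr
    obtain ⟨c, hc⟩ := rat_int_of_sq r (d : ℤ) (by rw [hr]; push_cast; ring)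
    have hc2 : c ^ 2 = (d : ℤ) := by
      have : (c : ℚ) ^ 2 = (d : ℚ) := by rw [hc, hr]
      exact_mod_cast this
    have hdvd : c.natAbs * c.natAbs ∣ d := by
      have : c.natAbs ^ 2 = d := by
        have := congrArg Int.natAbs hc2
        simpa [Int.natAbs_pow] using this
      exact ⟨1, by rw [← this]; ring⟩
    have := hsf c.natAbs hdvd
    rw [Nat.isUnit_iff] at this
    have : c ^ 2 = 1 := by
      have h1 : c.natAbs = 1 := this
      have : c = 1 ∨ c = -1 := by omega
      rcases this with rfl | rfl <;> norm_num
    omega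
  -- linear independence of 1, θ
  have hli : LinearIndependent ℚ ![(1 : K), θ] := by
    rw [linearIndependent_fin2]
    constructor
    · simp only [Matrix.cons_val_one, Matrix.head_cons]
      intro h
      simp only [Matrix.cons_val_zero, Matrix.cons_val_fin_one] at h
      rw [h] at hθ2
      exact hdK (by simpa using hθ2.symm)
    · intro a ha
      simp only [Matrix.cons_val_one, Matrix.head_cons, Matrix.cons_val_zero] at ha
      have ha0 : a ≠ 0 := by
        rintro rfl
        simp at ha
      -- (1/a)^2 = d
      apply hnsq (1 / a)
      have hinj := (algebraMap ℚ K).injective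
      apply hinj
      have h1 : (algebraMap ℚ K) a * θ = 1 := by
        rw [← Algebra.smul_def]; exact ha
      have ha0' : (algebraMap ℚ K) a ≠ 0 := by
        simpa using (map_ne_zero (algebraMap ℚ K)).mpr ha0
      have hθeq : θ = ((algebraMap ℚ K) a)⁻¹ := (inv_eq_of_mul_eq_one_right h1).symm
      rw [map_pow, map_div₀, map_one, map_natCast, one_div]
      rw [hθeq] at hθ2
      exact hθ2
  have hcard : Fintype.card (Fin 2) = Module.finrank ℚ K := by simp [hdeg]
  set B : Module.Basis (Fin 2) ℚ K := basisOfLinearIndependentOfCardEqFinrank hli hcard with hBdef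
  have hB : ⇑B = ![(1 : K), θ] := coe_basisOfLinearIndependentOfCardEqFinrank hli hcard
  have hB0 : B 0 = 1 := by rw [hB]; rfl
  have hB1 : B 1 = θ := by rw [hB]; rfl
  set x : K := algebraMap (𝓞 K) K β with hxdef
  set p : ℚ := B.repr x 0 with hp
  set q : ℚ := B.repr x 1 with hq
  have hx : x = p • (1 : K) + q • θ := by
    conv_lhs => rw [← B.sum_repr x]
    rw [Fin.sum_univ_two, hB0, hB1]
  have hrepr0 : ∀ a c : ℚ, B.repr (a • (1 : K) + c • θ) 0 = a := by
    intro a c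
    rw [← hB0, ← hB1, map_add, map_smul, map_smul, B.repr_self, B.repr_self]
    simp [Finsupp.single_apply]
  have hrepr1 : ∀ a c : ℚ, B.repr (a • (1 : K) + c • θ) 1 = c := by
    intro a c
    rw [← hB0, ← hB1, map_add, map_smul, map_smul, B.repr_self, B.repr_self]
    simp [Finsupp.single_apply]
  -- multiplication facts
  have hmul0 : x * B 0 = p • (1 : K) + q • θ := by rw [hB0, mul_one, hx]
  have hmul1 : x * B 1 = (q * (d : ℚ)) • (1 : K) + p • θ := by
    rw [hB1, hx]
    have : (d : K) = (d : ℚ) • (1 : K) := by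
      rw [Algebra.smul_def, mul_one, map_natCast]
    rw [add_mul, smul_mul_assoc, smul_mul_assoc, one_mul, ← sq, hθ2, this,
      smul_smul, mul_comm q ((d:ℚ))]
    rw [add_comm, mul_comm ((d:ℚ)) q]
  -- entries of leftMulMatrix
  have e00 : Algebra.leftMulMatrix B x 0 0 = p := by
    rw [Algebra.leftMulMatrix_eq_repr_mul, hmul0]; exact hrepr0 p q
  have e10 : Algebra.leftMulMatrix B x 1 0 = q := by
    rw [Algebra.leftMulMatrix_eq_repr_mul, hmul0]; exact hrepr1 p q
  have e01 : Algebra.leftMulMatrix B x 0 1 = q * (d : ℚ) := by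
    rw [Algebra.leftMulMatrix_eq_repr_mul, hmul1]; exact hrepr0 _ _
  have e11 : Algebra.leftMulMatrix B x 1 1 = p := by
    rw [Algebra.leftMulMatrix_eq_repr_mul, hmul1]; exact hrepr1 _ _
  -- norm and trace
  have hnormx : Algebra.norm ℚ x = p ^ 2 - (d : ℚ) * q ^ 2 := by
    rw [Algebra.norm_eq_matrix_det B x, Matrix.det_fin_two, e00, e01, e10, e11]; ring
  have htracex : Algebra.trace ℚ K x = 2 * p := by
    rw [Algebra.trace_eq_matrix_trace B x, Matrix.trace_fin_two, e00, e11]; ring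
  have hN : ((n : ℤ) : ℚ) = p ^ 2 - (d : ℚ) * q ^ 2 := by
    rw [← hn, Algebra.coe_norm_int, RingOfIntegers.coe_eq_algebraMap, ← hxdef, hnormx]
  set t : ℤ := Algebra.trace ℤ (𝓞 K) β with ht
  have hT : ((t : ℤ) : ℚ) = 2 * p := by
    rw [ht, Algebra.coe_trace_int, RingOfIntegers.coe_eq_algebraMap, ← hxdef, htracex]
  -- d * (2q)^2 = t^2 - 4n
  have hdr : ((d : ℚ)) * (2 * q) ^ 2 = (t : ℚ) ^ 2 - 4 * (n : ℚ) := by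
    linear_combination (-(t : ℚ) - 2 * p) * hT + 4 * hN
  obtain ⟨c, hc⟩ := rat_int_of_sq ((d : ℚ) * (2 * q)) ((d : ℤ) * (t ^ 2 - 4 * n)) (by
    push_cast
    linear_combination (d : ℚ) * hdr)
  have hc2 : c ^ 2 = (d : ℤ) * (t ^ 2 - 4 * n) := by
    have : (c : ℚ) ^ 2 = ((d : ℤ) : ℚ) * ((t ^ 2 - 4 * n : ℤ) : ℚ) := by
      rw [hc]
      push_cast
      linear_combination (d : ℚ) * hdr
    exact_mod_cast this
  have hsfz : Squarefree (d : ℤ) := Int.squarefree_natCast.mpr hsf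
  have hdc : (d : ℤ) ∣ c := by
    rw [← Squarefree.dvd_pow_iff_dvd hsfz (two_ne_zero)]
    exact ⟨t ^ 2 - 4 * n, hc2⟩
  obtain ⟨s, hs⟩ := hdc
  have hqs : 2 * q = (s : ℚ) := by
    have hdQ : (d : ℚ) ≠ 0 := by
      exact_mod_cast Nat.cast_ne_zero.mpr (Nat.zero_lt_of_lt hd1).ne'
    have heq2 : (d : ℚ) * (2 * q) = (d : ℚ) * (s : ℚ) := by
      rw [← hc, hs]; push_cast; ring
    exact mul_left_cancel₀ hdQ heq2
  -- t^2 - d s^2 = 4n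
  have hts : t ^ 2 - (d : ℤ) * s ^ 2 = 4 * n := by
    have : ((t : ℚ)) ^ 2 - (d : ℚ) * (s : ℚ) ^ 2 = 4 * (n : ℚ) := by
      rw [← hqs]
      linear_combination -hdr
    exact_mod_cast this
  -- parity
  have hd4 : (d : ℤ) % 4 = 3 := by
    obtain ⟨k, hk⟩ := hmodd
    have : d = 4 * (9 * k ^ 2 + 10 * k + 2) + 3 := by rw [hd, hk]; ring
    rw [this]; push_cast; omega
  obtain ⟨⟨u, hu⟩, ⟨v, hv⟩⟩ := parity_step (d : ℤ) t s n hd4 hts hn2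
  have hfin : u ^ 2 - (d : ℤ) * v ^ 2 = n := by
    have : 4 * (u ^ 2 - (d : ℤ) * v ^ 2) = 4 * n := by
      rw [← hts, hu, hv]; ring
    linarith
  refine hcore u v n hn2 ?_
  rw [show ((9:ℤ) * (m:ℤ) ^ 2 + 2 * (m:ℤ)) = ((d : ℕ) : ℤ) by rw [hd]; push_cast; ring]
  exact hfin

theorem class_A_order_two (m : ℕ) (hm : 0 < m) (hm2 : Odd m) (hm3 : m % 3 = 2)
    (hsf : Squarefree (9 * m ^ 2 + 2 * m))
    (K : Type) [Field K] [NumberField K]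
    (hdeg : Module.finrank ℚ K = 2)
    (α : 𝓞 K) (hα : α ^ 2 = (9 * m ^ 2 + 2 * m : ℕ)) :
    ∃ hI : Ideal.span ({2, 1 + α} : Set (𝓞 K)) ∈ (Ideal (𝓞 K))⁰,
      ¬ (Ideal.span ({2, 1 + α} : Set (𝓞 K))).IsPrincipal ∧
      orderOf (ClassGroup.mk0 (⟨Ideal.span ({2, 1 + α} : Set (𝓞 K)), hI⟩ :
        (Ideal (𝓞 K))⁰)) = 2 := by
  obtain ⟨j, hj⟩ := hm2
  have hm5 : 2 ≤ (m : ℤ) := by omega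
  set d : ℕ := 9 * m ^ 2 + 2 * m with hd
  obtain ⟨k, hk⟩ : ∃ k : ℕ, d = 2 * k + 1 :=
    ⟨18 * j ^ 2 + 20 * j + 5, by rw [hd, hj]; ring⟩
  obtain ⟨c, hc⟩ : ∃ c : ℕ, d = 4 * c + 3 :=
    ⟨9 * j ^ 2 + 10 * j + 2, by rw [hd, hj]; ring⟩
  have hdk : ((d : ℕ) : 𝓞 K) = 2 * (k : 𝓞 K) + 1 := by
    rw [hk]; push_cast; ring
  have hdc : ((d : ℕ) : 𝓞 K) = 4 * (c : 𝓞 K) + 3 := by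
    rw [hc]; push_cast; ring
  set I : Ideal (𝓞 K) := Ideal.span ({2, 1 + α} : Set (𝓞 K)) with hI_def
  have h2I : (2 : 𝓞 K) ∈ I := Ideal.subset_span (by simp)
  have h1αI : (1 + α) ∈ I := Ideal.subset_span (by simp)
  -- I^2 = (2)
  have hsq : I ^ 2 = Ideal.span {(2 : 𝓞 K)} := by
    rw [pow_two]
    apply le_antisymm
    · rw [hI_def, Ideal.span_mul_span']
      rw [Ideal.span_le]
      rintro z hz
      rw [Set.mem_mul] at hz
      obtain ⟨a, ha, b, hb, rfl⟩ := hz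
      have hdvd : (2 : 𝓞 K) ∣ a * b := by
        simp only [Set.mem_insert_iff, Set.mem_singleton_iff] at ha hb
        have key : (2 : 𝓞 K) ∣ (1 + α) * (1 + α) :=
          ⟨(k : 𝓞 K) + 1 + α, by linear_combination hα + hdk⟩
        rcases ha with rfl | rfl <;> rcases hb with rfl | rfl
        · exact ⟨2, by ring⟩
        · exact Dvd.dvd.mul_right ⟨1, by ring⟩ _
        · exact Dvd.dvd.mul_left ⟨1, by ring⟩ _
        · exact key
      exact Ideal.mem_span_singleton.mpr hdvd
    · rw [Ideal.span_le, Set.singleton_subset_iff]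
      have m1 : (1 + α) * (1 + α) ∈ I * I := Ideal.mul_mem_mul h1αI h1αI
      have m2 : 2 * (1 + α) ∈ I * I := Ideal.mul_mem_mul h2I h1αI
      have m3 : 2 * 2 * (c : 𝓞 K) ∈ I * I :=
        Ideal.mul_mem_right _ _ (Ideal.mul_mem_mul h2I h2I)
      have key : (2 : 𝓞 K) = (1 + α) * (1 + α) - 2 * (1 + α) - 2 * 2 * (c : 𝓞 K) := by
        linear_combination -hα - hdc
      rw [SetLike.mem_coe, key]
      exact Submodule.sub_mem _ (Submodule.sub_mem _ m1 m2) m3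
  have h2ne : (2 : 𝓞 K) ≠ 0 := two_ne_zero
  have hInz : I ≠ 0 := by
    intro h0
    rw [h0] at h2I
    exact h2ne ((Submodule.mem_bot _).mp h2I)
  have hI : I ∈ (Ideal (𝓞 K))⁰ := mem_nonZeroDivisors_iff_ne_zero.mpr hInz
  -- non-principality
  have hnp : ¬ I.IsPrincipal := by
    rintro ⟨β, hβ⟩
    have hspan : Ideal.span {β ^ 2} = Ideal.span {(2 : 𝓞 K)} := by
      calc Ideal.span {β ^ 2} = Ideal.span {β} ^ 2 := (Ideal.span_singleton_pow β 2).symm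
      _ = I ^ 2 := by rw [hβ]
      _ = Ideal.span {(2 : 𝓞 K)} := hsq
    obtain ⟨u, hu⟩ := Ideal.span_singleton_eq_span_singleton.mp hspan
    have hNu : IsUnit (Algebra.norm ℤ (u : 𝓞 K)) := u.isUnit.map (Algebra.norm ℤ)
    rw [Int.isUnit_iff] at hNu
    have hN2 : Algebra.norm ℤ (2 : 𝓞 K) = 4 := by
      have hcard2 : Fintype.card (Module.Free.ChooseBasisIndex ℤ (𝓞 K)) = 2 := by
        rw [← Module.finrank_eq_card_chooseBasisIndex, RingOfIntegers.rank, hdeg]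
      rw [show (2 : 𝓞 K) = algebraMap ℤ (𝓞 K) 2 by simp,
        Algebra.norm_algebraMap_of_basis (RingOfIntegers.basis K), hcard2]
      norm_num
    have heqn : (Algebra.norm ℤ β) ^ 2 * Algebra.norm ℤ (u : 𝓞 K) = 4 := by
      rw [← map_pow, ← map_mul, hu, hN2]
    set n : ℤ := Algebra.norm ℤ β with hn
    rcases hNu with h1 | h1
    · rw [h1, mul_one] at heqn
      have hn2 : n = 2 ∨ n = -2 := by
        have : (n - 2) * (n + 2) = 0 := by linear_combination heqn
        rcases mul_eq_zero.mp this with h | h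
        · left; linarith
        · right; linarith
      exact no_norm_pm_two m hm5 ⟨j, hj⟩ hsf K hdeg α hα β n rfl hn2
        (fun x y e he => core_dioph (m : ℤ) hm5 y.natAbs x y e rfl he)
    · rw [h1] at heqn
      nlinarith [sq_nonneg n]
  refine ⟨hI, hnp, ?_⟩
  have hprin : (I ^ 2).IsPrincipal := by rw [hsq]; exact ⟨2, rfl⟩
  have hpow : (ClassGroup.mk0 (⟨I, hI⟩ : (Ideal (𝓞 K))⁰)) ^ 2 = 1 := by
    rw [← map_pow]
    exact (ClassGroup.mk0_eq_one_iff (pow_mem hI 2)).mpr hprin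
  have hne1 : (ClassGroup.mk0 (⟨I, hI⟩ : (Ideal (𝓞 K))⁰)) ≠ 1 := by
    intro h1
    exact hnp ((ClassGroup.mk0_eq_one_iff hI).mp h1)
  exact orderOf_eq_prime hpow hne1
end

section
/- Let m ≡ 2 (mod 3) be an odd positive integer with d = 9m² + 2m square-free. Then the fundamental unit of Q(√d) is ε = 9m + 1 + 3√d, with norm N(ε) = 1. -/
open NumberField

/-- A rational whose square times a squarefree integer is an integer is itself an integer. -/
lemma int_of_squarefree_mul_sq {c : ℤ} (hc : Squarefree c) {s : ℚ} {k : ℤ}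
    (h : (c : ℚ) * s ^ 2 = (k : ℚ)) : ∃ j : ℤ, (j : ℚ) = s := by
  have hden : (s.den : ℚ) ≠ 0 := by exact_mod_cast s.den_ne_zero
  have hs := s.num_div_den
  have key : c * s.num ^ 2 = k * (s.den : ℤ) ^ 2 := by
    have : (c : ℚ) * ((s.num : ℚ) / (s.den : ℚ)) ^ 2 = (k : ℚ) := by rw [hs]; exact h
    field_simp at this
    rw [mul_comm (k : ℤ)]
    exact_mod_cast this
  have hdvd : ((s.den : ℤ)) ^ 2 ∣ c * s.num ^ 2 := ⟨k, by linarith [key]⟩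
  have hcop : IsCoprime (s.num) ((s.den : ℤ)) :=
    Int.isCoprime_iff_gcd_eq_one.mpr s.reduced
  have hcop2 : IsCoprime (((s.den : ℤ)) ^ 2) (s.num ^ 2) := (hcop.symm.pow)
  have hdvd2 : ((s.den : ℤ)) ^ 2 ∣ c := hcop2.dvd_of_dvd_mul_right hdvd
  have hu : IsUnit ((s.den : ℤ)) := hc _ (by rwa [← sq])
  have hd1 : s.den = 1 := by
    rcases Int.isUnit_iff.mp hu with h1 | h1
    · exact_mod_cast h1
    · exfalso; omega
  exact ⟨s.num, by rw [← hs, hd1]; simp⟩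

/-- Map from Pell solutions to units of a commutative ring containing a square root of `d`. -/
def pellUnit {R : Type*} [CommRing R] {d : ℤ} {α : R} (hα : α ^ 2 = (d : R)) :
    Pell.Solution₁ d →* Rˣ where
  toFun s :=
    { val := (s.x : R) + (s.y : R) * α
      inv := (s.x : R) - (s.y : R) * α
      val_inv := by
        have hp : ((s.x : R)) ^ 2 - (d : R) * (s.y : R) ^ 2 = 1 := by
          have h0 := s.prop
          have := congrArg (fun z : ℤ => (z : R)) h0
          push_cast at this
          convert this using 2 <;> push_cast <;> ring
        linear_combination hp - (s.y : R) ^ 2 * hα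
      inv_val := by
        have hp : ((s.x : R)) ^ 2 - (d : R) * (s.y : R) ^ 2 = 1 := by
          have h0 := s.prop
          have := congrArg (fun z : ℤ => (z : R)) h0
          push_cast at this
          convert this using 2 <;> push_cast <;> ring
        linear_combination hp - (s.y : R) ^ 2 * hα }
  map_one' := by ext; simp
  map_mul' a b := by
    ext
    simp only [Pell.Solution₁.x_mul, Pell.Solution₁.y_mul, Units.val_mul]
    push_cast
    linear_combination (-(a.y : R) * (b.y : R)) * hα

lemma pellUnit_neg {R : Type*} [CommRing R] {d : ℤ} {α : R} (hα : α ^ 2 = (d : R))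
    (s : Pell.Solution₁ d) : pellUnit hα (-s) = -(pellUnit hα s) := by
  ext
  simp only [pellUnit, MonoidHom.coe_mk, OneHom.coe_mk, Pell.Solution₁.x_neg,
    Pell.Solution₁.y_neg, Units.val_neg]
  push_cast
  ring

lemma pell_min_aux (M d : ℤ) (hM : 1 ≤ M) (hd : d = 9 * M ^ 2 + 2 * M)
    (b : Pell.Solution₁ d) (hb : 1 < b.x) : 9 * M + 1 ≤ b.x := by
  have hy : b.y ≠ 0 := Pell.Solution₁.y_ne_zero_of_one_lt_x hb
  have hprop : b.x ^ 2 - (9 * M ^ 2 + 2 * M) * b.y ^ 2 = 1 := by rw [← hd]; exact b.prop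
  obtain ⟨X, hX⟩ : ∃ X, b.x = X := ⟨_, rfl⟩
  obtain ⟨Y, hY⟩ : ∃ Y, b.y = Y := ⟨_, rfl⟩
  rw [hX, hY] at hprop
  rw [hX] at hb ⊢
  rw [hY] at hy
  clear hX hY hd
  have hX0 : (0 : ℤ) ≤ X := by linarith
  have hcases : Y ≤ -3 ∨ Y = -2 ∨ Y = -1 ∨ Y = 1 ∨ Y = 2 ∨ 3 ≤ Y := by omega
  have hdpos : (0 : ℤ) ≤ 9 * M ^ 2 + 2 * M := by nlinarith
  rcases hcases with h | h | h | h | h | h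
  · have hY9 : 9 ≤ Y ^ 2 := by nlinarith
    by_contra hle
    push_neg at hle
    have hX9 : X ≤ 9 * M := by omega
    have h1 : X * X ≤ (9 * M) * (9 * M) := mul_le_mul hX9 hX9 hX0 (by linarith)
    have h2 : (9 * M ^ 2 + 2 * M) * 9 ≤ (9 * M ^ 2 + 2 * M) * Y ^ 2 :=
      mul_le_mul_of_nonneg_left hY9 hdpos
    nlinarith [h1, h2, hprop]
  · exfalso
    rw [h] at hprop
    rcases le_or_gt X (6 * M) with h6 | h6
    · have h1 : X * X ≤ (6 * M) * (6 * M) := mul_le_mul h6 h6 hX0 (by linarith)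
      nlinarith [h1, hprop]
    · have h7 : 6 * M + 1 ≤ X := h6
      have h1 : (6 * M + 1) * (6 * M + 1) ≤ X * X := mul_le_mul h7 h7 (by linarith) hX0
      nlinarith [h1, hprop]
  · exfalso
    rw [h] at hprop
    rcases le_or_gt X (3 * M) with h6 | h6
    · have h1 : X * X ≤ (3 * M) * (3 * M) := mul_le_mul h6 h6 hX0 (by linarith)
      nlinarith [h1, hprop]
    · have h7 : 3 * M + 1 ≤ X := h6
      have h1 : (3 * M + 1) * (3 * M + 1) ≤ X * X := mul_le_mul h7 h7 (by linarith) hX0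
      nlinarith [h1, hprop]
  · exfalso
    rw [h] at hprop
    rcases le_or_gt X (3 * M) with h6 | h6
    · have h1 : X * X ≤ (3 * M) * (3 * M) := mul_le_mul h6 h6 hX0 (by linarith)
      nlinarith [h1, hprop]
    · have h7 : 3 * M + 1 ≤ X := h6
      have h1 : (3 * M + 1) * (3 * M + 1) ≤ X * X := mul_le_mul h7 h7 (by linarith) hX0
      nlinarith [h1, hprop]
  · exfalso
    rw [h] at hprop
    rcases le_or_gt X (6 * M) with h6 | h6
    · have h1 : X * X ≤ (6 * M) * (6 * M) := mul_le_mul h6 h6 hX0 (by linarith)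
      nlinarith [h1, hprop]
    · have h7 : 6 * M + 1 ≤ X := h6
      have h1 : (6 * M + 1) * (6 * M + 1) ≤ X * X := mul_le_mul h7 h7 (by linarith) hX0
      nlinarith [h1, hprop]
  · have hY9 : 9 ≤ Y ^ 2 := by nlinarith
    by_contra hle
    push_neg at hle
    have hX9 : X ≤ 9 * M := by omega
    have h1 : X * X ≤ (9 * M) * (9 * M) := mul_le_mul hX9 hX9 hX0 (by linarith)
    have h2 : (9 * M ^ 2 + 2 * M) * 9 ≤ (9 * M ^ 2 + 2 * M) * Y ^ 2 :=
      mul_le_mul_of_nonneg_left hY9 hdpos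
    nlinarith [h1, h2, hprop]

theorem fundamental_unit_eq (m : ℕ) (hm : 0 < m) (hm2 : Odd m) (hm3 : m % 3 = 2)
    (hsf : Squarefree (9 * m ^ 2 + 2 * m))
    (K : Type) [Field K] [NumberField K]
    (hdeg : Module.finrank ℚ K = 2)
    (α : 𝓞 K) (hα : α ^ 2 = (9 * m ^ 2 + 2 * m : ℕ)) :
    ∃ ε : (𝓞 K)ˣ, (ε : 𝓞 K) = (9 * m + 1 : ℕ) + 3 * α ∧
      Algebra.norm ℤ ((ε : 𝓞 K)) = 1 ∧
      ∀ u : (𝓞 K)ˣ, ∃ n : ℤ, u = ε ^ n ∨ u = -ε ^ n := by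
  have hm1 : 1 ≤ (m : ℤ) := by exact_mod_cast hm
  set D : ℤ := 9 * (m : ℤ) ^ 2 + 2 * (m : ℤ) with hD
  have hDnat : ((9 * m ^ 2 + 2 * m : ℕ) : ℤ) = D := by rw [hD]; push_cast; ring
  have hsfD : Squarefree D := by rw [← hDnat]; exact Int.squarefree_natCast.mpr hsf
  have hD11 : 11 ≤ D := by rw [hD]; nlinarith
  have hαD : α ^ 2 = (D : 𝓞 K) := by rw [hα, ← hDnat]; push_cast; ring
  obtain ⟨k₀, hk₀⟩ := hm2
  have hmk : (m : ℤ) = 2 * (k₀ : ℤ) + 1 := by exact_mod_cast hk₀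
  set c : ℤ := 9 * (k₀ : ℤ) ^ 2 + 10 * (k₀ : ℤ) + 2 with hc
  have hD43 : D = 4 * c + 3 := by rw [hD, hmk, hc]; ring
  set A : K := algebraMap (𝓞 K) K α with hA
  have hA2 : A ^ 2 = (D : K) := by
    rw [hA, ← map_pow, hαD]; simp
  have hAirr : ∀ q : ℚ, algebraMap ℚ K q ≠ A := by
    intro q hq
    have hq2 : (1 : ℚ) * q ^ 2 = ((D : ℤ) : ℚ) := by
      have h1 : algebraMap ℚ K (q ^ 2) = algebraMap ℚ K ((D : ℚ)) := by
        rw [map_pow, hq, hA2]; simp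
      have := (algebraMap ℚ K).injective h1
      rw [one_mul, this]
    obtain ⟨j, hj⟩ := int_of_squarefree_mul_sq squarefree_one hq2
    have hDj : D = j * j := by
      have : ((j : ℚ)) ^ 2 = ((D : ℤ) : ℚ) := by rw [hj, ← hq2, one_mul]
      have h2 : (j : ℤ) ^ 2 = D := by exact_mod_cast this
      linear_combination -h2
    have := hsfD j ⟨1, by rw [hDj]; ring⟩
    have hD1 : D = 1 := by
      rcases Int.isUnit_iff.mp this with h | h <;> rw [hDj, h] <;> ring
    linarith
  -- basis
  have hli : LinearIndependent ℚ ![(1 : K), A] := by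
    rw [LinearIndependent.pair_iff' (one_ne_zero)]
    intro q hq
    exact hAirr q (by rw [← hq, Algebra.smul_def, mul_one])
  have hcard : Fintype.card (Fin 2) = Module.finrank ℚ K := by simp [hdeg]
  set B := basisOfLinearIndependentOfCardEqFinrank hli hcard with hBdef
  have hB : ⇑B = ![(1 : K), A] := coe_basisOfLinearIndependentOfCardEqFinrank hli hcard
  have hB0 : B 0 = 1 := by rw [hB]; rfl
  have hB1 : B 1 = A := by rw [hB]; rfl
  have hrepr : ∀ a b : ℚ, B.repr (algebraMap ℚ K a + algebraMap ℚ K b * A)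
      = Finsupp.single 0 a + Finsupp.single 1 b := by
    intro a b
    have h1 : algebraMap ℚ K a + algebraMap ℚ K b * A = a • B 0 + b • B 1 := by
      rw [hB0, hB1, Algebra.smul_def, Algebra.smul_def, mul_one]
    rw [h1, map_add, map_smul, map_smul, B.repr_self, B.repr_self]
    simp [Finsupp.smul_single]
  have hmat : ∀ a b : ℚ, Algebra.leftMulMatrix B (algebraMap ℚ K a + algebraMap ℚ K b * A)
      = !![a, ((D : ℤ) : ℚ) * b; b, a] := by
    intro a b
    have hx0 : (algebraMap ℚ K a + algebraMap ℚ K b * A) * B 0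
        = algebraMap ℚ K a + algebraMap ℚ K b * A := by rw [hB0, mul_one]
    have hx1 : (algebraMap ℚ K a + algebraMap ℚ K b * A) * B 1
        = algebraMap ℚ K (((D : ℤ) : ℚ) * b) + algebraMap ℚ K a * A := by
      rw [hB1]
      have hDK : algebraMap ℚ K (((D : ℤ) : ℚ)) = ((D : ℤ) : K) := by simp
      rw [map_mul, hDK]
      linear_combination (algebraMap ℚ K b) * hA2
    ext i j
    rw [Algebra.leftMulMatrix_eq_repr_mul]
    fin_cases j
    · simp only [Fin.mk_zero]
      rw [hx0, hrepr]
      fin_cases i <;> simp [Finsupp.single_apply]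
    · simp only [Fin.mk_one]
      rw [hx1, hrepr]
      fin_cases i <;> simp [Finsupp.single_apply]
  have htr : ∀ a b : ℚ, Algebra.trace ℚ K (algebraMap ℚ K a + algebraMap ℚ K b * A)
      = 2 * a := by
    intro a b
    rw [Algebra.trace_eq_matrix_trace B, hmat, Matrix.trace_fin_two_of]; ring
  have hnm : ∀ a b : ℚ, Algebra.norm ℚ (algebraMap ℚ K a + algebraMap ℚ K b * A)
      = a ^ 2 - ((D : ℤ) : ℚ) * b ^ 2 := by
    intro a b
    rw [Algebra.norm_eq_matrix_det B, hmat, Matrix.det_fin_two_of]; ring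
  have hcast : ∀ a b : ℤ, (((a : 𝓞 K) + (b : 𝓞 K) * α : 𝓞 K) : K)
      = algebraMap ℚ K ((a : ℚ)) + algebraMap ℚ K ((b : ℚ)) * A := by
    intro a b
    push_cast
    rw [hA]
    simp [NumberField.RingOfIntegers.coe_eq_algebraMap]
  have hnormZ : ∀ a b : ℤ, Algebra.norm ℤ ((a : 𝓞 K) + (b : 𝓞 K) * α) = a ^ 2 - D * b ^ 2 := by
    intro a b
    have h1 : ((Algebra.norm ℤ ((a : 𝓞 K) + (b : 𝓞 K) * α) : ℤ) : ℚ)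
        = ((a ^ 2 - D * b ^ 2 : ℤ) : ℚ) := by
      rw [Algebra.coe_norm_int, hcast a b, hnm]; push_cast; ring
    exact_mod_cast h1
  -- the parity helpers
  have hnorm_ne : ∀ a b : ℤ, a ^ 2 - D * b ^ 2 ≠ -1 := by
    intro a b h
    have h' : a ^ 2 - (4 * c + 3) * b ^ 2 = -1 := by rw [← hD43]; exact h
    rcases Int.even_or_odd a with ⟨j, hj⟩ | ⟨j, hj⟩ <;>
      rcases Int.even_or_odd b with ⟨l, hl⟩ | ⟨l, hl⟩ <;> subst hj <;> subst hl
    · obtain ⟨X, hX⟩ : ∃ X : ℤ, 4 * X = -1 :=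
        ⟨j ^ 2 - (4 * c + 3) * l ^ 2, by linear_combination h'⟩
      omega
    · obtain ⟨X, hX⟩ : ∃ X : ℤ, 4 * X = 2 :=
        ⟨j ^ 2 - c * (2 * l + 1) ^ 2 - 3 * (l ^ 2 + l), by linear_combination h'⟩
      omega
    · obtain ⟨X, hX⟩ : ∃ X : ℤ, 4 * X = -2 :=
        ⟨j ^ 2 + j - (4 * c + 3) * l ^ 2, by linear_combination h'⟩
      omega
    · obtain ⟨X, hX⟩ : ∃ X : ℤ, 4 * X = 1 :=
        ⟨j ^ 2 + j - c * (2 * l + 1) ^ 2 - 3 * (l ^ 2 + l), by linear_combination h'⟩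
      omega
  have decomp : ∀ x : 𝓞 K, ∃ a b : ℤ, x = (a : 𝓞 K) + (b : 𝓞 K) * α := by
    intro x
    set a : ℚ := B.repr ((x : K)) 0 with ha
    set b : ℚ := B.repr ((x : K)) 1 with hb
    have hxab : (x : K) = algebraMap ℚ K a + algebraMap ℚ K b * A := by
      conv_lhs => rw [← B.sum_repr ((x : K))]
      rw [Fin.sum_univ_two, ← ha, ← hb, hB0, hB1, Algebra.smul_def, Algebra.smul_def, mul_one]
    set t : ℤ := Algebra.trace ℤ (𝓞 K) x with htdef
    set n : ℤ := Algebra.norm ℤ x with hndef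
    clear_value t n
    have ht : ((t : ℤ) : ℚ) = 2 * a := by
      rw [htdef, Algebra.coe_trace_int, hxab, htr]
    have hn : ((n : ℤ) : ℚ) = a ^ 2 - ((D : ℤ) : ℚ) * b ^ 2 := by
      rw [hndef, Algebra.coe_norm_int, hxab, hnm]
    have hDb : ((D : ℤ) : ℚ) * (2 * b) ^ 2 = ((t ^ 2 - 4 * n : ℤ) : ℚ) := by
      push_cast
      linear_combination (-(((t : ℤ) : ℚ) + 2 * a)) * ht + 4 * hn
    obtain ⟨b', hb'⟩ := int_of_squarefree_mul_sq hsfD hDb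
    have heq : t ^ 2 - (4 * c + 3) * b' ^ 2 = 4 * n := by
      have h2 : ((D : ℤ) : ℚ) * ((b' : ℤ) : ℚ) ^ 2 = ((t ^ 2 - 4 * n : ℤ) : ℚ) := by
        rw [hb']; exact hDb
      have h3 : D * b' ^ 2 = t ^ 2 - 4 * n := by exact_mod_cast h2
      rw [← hD43]; linarith
    have hpar : Even t ∧ Even b' := by
      rcases Int.even_or_odd t with htp | ⟨j, hj⟩
      · rcases Int.even_or_odd b' with hbp | ⟨l, hl⟩
        · exact ⟨htp, hbp⟩
        · exfalso
          obtain ⟨j, hj⟩ := htp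
          subst hj; subst hl
          obtain ⟨X, hX⟩ : ∃ X : ℤ, 4 * X = 3 :=
            ⟨j ^ 2 - c * (2 * l + 1) ^ 2 - 3 * (l ^ 2 + l) - n, by linear_combination heq⟩
          omega
      · exfalso
        rcases Int.even_or_odd b' with ⟨l, hl⟩ | ⟨l, hl⟩ <;> subst hj <;> subst hl
        · obtain ⟨X, hX⟩ : ∃ X : ℤ, 4 * X = -1 :=
            ⟨j ^ 2 + j - (4 * c + 3) * l ^ 2 - n, by linear_combination heq⟩
          omega
        · obtain ⟨X, hX⟩ : ∃ X : ℤ, 4 * X = 2 :=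
            ⟨j ^ 2 + j - c * (2 * l + 1) ^ 2 - 3 * (l ^ 2 + l) - n, by linear_combination heq⟩
          omega
    obtain ⟨⟨a₀, ha₀⟩, ⟨b₀, hb₀⟩⟩ := hpar
    have haa : a = ((a₀ : ℤ) : ℚ) := by
      have : ((t : ℤ) : ℚ) = ((a₀ : ℤ) : ℚ) + ((a₀ : ℤ) : ℚ) := by exact_mod_cast ha₀
      rw [this] at ht; linarith
    have hbb : b = ((b₀ : ℤ) : ℚ) := by
      have h4 : ((b' : ℤ) : ℚ) = ((b₀ : ℤ) : ℚ) + ((b₀ : ℤ) : ℚ) := by exact_mod_cast hb₀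
      rw [h4] at hb'; linarith
    refine ⟨a₀, b₀, ?_⟩
    apply NumberField.RingOfIntegers.coe_injective
    show ((x : 𝓞 K) : K) = _
    rw [hxab, haa, hbb, ← hcast a₀ b₀]
  -- Pell side
  have hs₀prop : (9 * (m : ℤ) + 1) ^ 2 - D * 3 ^ 2 = 1 := by rw [hD]; ring
  set s₀ : Pell.Solution₁ D := Pell.Solution₁.mk (9 * (m : ℤ) + 1) 3 hs₀prop with hs₀
  have hs₀x : s₀.x = 9 * (m : ℤ) + 1 := by rw [hs₀]; simp
  have hs₀y : s₀.y = 3 := by rw [hs₀]; simp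
  have hfund : Pell.IsFundamental s₀ := by
    refine ⟨by rw [hs₀x]; linarith, by rw [hs₀y]; norm_num, ?_⟩
    intro b hb
    rw [hs₀x]
    exact pell_min_aux (m : ℤ) D hm1 hD b hb
  -- assemble
  refine ⟨pellUnit hαD s₀, ?_, ?_, ?_⟩
  · show ((pellUnit hαD s₀ : (𝓞 K)ˣ) : 𝓞 K) = _
    have : ((pellUnit hαD s₀ : (𝓞 K)ˣ) : 𝓞 K) = ((s₀.x : ℤ) : 𝓞 K) + ((s₀.y : ℤ) : 𝓞 K) * α := rfl
    rw [this, hs₀x, hs₀y]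
    push_cast
    ring
  · have h1 : ((pellUnit hαD s₀ : (𝓞 K)ˣ) : 𝓞 K)
        = ((9 * (m : ℤ) + 1 : ℤ) : 𝓞 K) + ((3 : ℤ) : 𝓞 K) * α := by
      have : ((pellUnit hαD s₀ : (𝓞 K)ˣ) : 𝓞 K) = ((s₀.x : ℤ) : 𝓞 K) + ((s₀.y : ℤ) : 𝓞 K) * α := rfl
      rw [this, hs₀x, hs₀y]
    rw [h1, hnormZ, hD]; ring
  · intro u
    obtain ⟨a, b, hab⟩ := decomp u.val
    have hnu : IsUnit (Algebra.norm ℤ ((u : 𝓞 K))) := u.isUnit.map (Algebra.norm ℤ)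
    have hval : Algebra.norm ℤ ((u : 𝓞 K)) = a ^ 2 - D * b ^ 2 := by rw [hab, hnormZ]
    have hprop : a ^ 2 - D * b ^ 2 = 1 := by
      rcases Int.isUnit_iff.mp hnu with h1 | h1
      · rw [← hval]; exact h1
      · exact absurd (hval ▸ h1) (hnorm_ne a b)
    set su : Pell.Solution₁ D := Pell.Solution₁.mk a b hprop with hsu_def
    have hsu : pellUnit hαD su = u := by
      apply Units.ext
      have h2 : ((pellUnit hαD su : (𝓞 K)ˣ) : 𝓞 K) = ((su.x : ℤ) : 𝓞 K) + ((su.y : ℤ) : 𝓞 K) * α := rfl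
      rw [h2, hsu_def]
      simp only [Pell.Solution₁.x_mk, Pell.Solution₁.y_mk]
      exact hab.symm
    obtain ⟨n, hn⟩ := hfund.eq_zpow_or_neg_zpow su
    refine ⟨n, ?_⟩
    rcases hn with hn | hn
    · left; rw [← hsu, hn, map_zpow]
    · right; rw [← hsu, hn, pellUnit_neg, map_zpow]
end
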